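/- Let L be an even lattice, U ⊂ L a hyperbolic plane summand with basis {e, f}, and E = ℤf + ℤl' a rank-2 primitive isotropic sublattice with l' ∈ U^⊥ isotropic. Suppose f' ∈ E also satisfies (e, f') = 1. Then l' ∈ (ℤe+ℤf)^⊥ ∩ (ℤe+ℤf')^⊥, and the orthogonal projection from (ℤe+ℤf)^⊥ to (ℤe+ℤf')^⊥ is an isometry which fixes l'. -/
import Mathlib


/-- Let `L` be an even lattice, `U = ℤe + ℤf ⊂ L` a hyperbolic plane
summand, and `E = ℤf + ℤl'` a rank-2 isotropic sublattice with `l' ∈ U^⊥` isotropic.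
Suppose `f' ∈ E` also satisfies `(e, f') = 1`.  Then `l'` lies in both
`(ℤe+ℤf)^⊥` and `(ℤe+ℤf')^⊥`, and the orthogonal projection
`P : x ↦ x − (f',x)·e − (e,x)·f'` from `(ℤe+ℤf)^⊥` to `(ℤe+ℤf')^⊥` is an isometry
(form-preserving, mapping onto the target) which fixes `l'`. -/
theorem stmt_16
    (L : Type) [AddCommGroup L] [Module ℤ L]
    (B : L →ₗ[ℤ] L →ₗ[ℤ] ℤ)
    (hsymm : ∀ x y, B x y = B y x) (heven : ∀ x, Even (B x x))
    (e f l' : L)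
    (hee : B e e = 0) (hff : B f f = 0) (hef : B e f = 1)
    (hl' : B l' l' = 0) (hel' : B e l' = 0) (hfl' : B f l' = 0)
    (f' : L) (hf'E : ∃ s t : ℤ, f' = s • f + t • l') (hef' : B e f' = 1) :
    B f' l' = 0 ∧
    (∀ x : L, B e x = 0 → B f x = 0 →
      B e (x - (B f' x) • e - (B e x) • f') = 0 ∧
      B f' (x - (B f' x) • e - (B e x) • f') = 0) ∧
    (∀ x z : L, B e x = 0 → B f x = 0 → B e z = 0 → B f z = 0 →
      B (x - (B f' x) • e - (B e x) • f') (z - (B f' z) • e - (B e z) • f') = B x z) ∧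
    (∀ z : L, B e z = 0 → B f' z = 0 →
      ∃ x : L, B e x = 0 ∧ B f x = 0 ∧ x - (B f' x) • e - (B e x) • f' = z) ∧
    l' - (B f' l') • e - (B e l') • f' = l' := by
  obtain ⟨s, t, hst⟩ := hf'E
  have hs : s = 1 := by
    rw [hst] at hef'
    simpa [hef, hel'] using hef'
  have hf'eq : f' = f + t • l' := by rw [hst, hs]; simp
  subst hf'eq
  have hl'f : B l' f = 0 := by rw [hsymm]; exact hfl'
  have hl'e : B l' e = 0 := by rw [hsymm]; exact hel'
  have hfe : B f e = 1 := by rw [hsymm]; exact hef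
  have hf'l' : B (f + t • l') l' = 0 := by simp [hfl', hl']
  have hf'f' : B (f + t • l') (f + t • l') = 0 := by
    simp [hff, hfl', hl'f, hl']
  have hf'e : B (f + t • l') e = 1 := by simp [hfe, hl'e]
  have hef'' : B e (f + t • l') = 1 := by simp [hef, hel']
  have hff' : B f (f + t • l') = 0 := by simp [hff, hfl']
  refine ⟨hf'l', ?_, ?_, ?_, ?_⟩
  · intro x hex hfx
    have hf'x : B (f + t • l') x = B f x + t * B l' x := by simp
    constructor
    · simp [map_sub, map_smul, hex, hee, hef'']
    · simp [map_sub, map_smul, hf'e, hf'f', hex, hff, hfl', hl'f, hl', hfe, hl'e]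
  · intro x z hex hfx hez hfz
    have hxe : B x e = 0 := by rw [hsymm]; exact hex
    have hxf' : B x (f + t • l') = B (f + t • l') x := (hsymm x _)
    have hxl : B x l' = B l' x := hsymm x l'
    have hxf : B x f = B f x := hsymm x f
    simp [map_sub, map_smul, hee, hef, hel', hex, hez, hxe, hxl, hxf, hfx, hfz,
      hfe, hl'e, hff, hfl', hl'f, hl']
  · intro z hez hf'z
    refine ⟨z - (B f z) • e, ?_, ?_, ?_⟩
    · simp [map_sub, map_smul, hez, hee]
    · simp [map_sub, map_smul, hfe]
    · have h1 : B (f + t • l') (z - (B f z) • e) = - B f z := by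
        have hz : B f z + t * B l' z = 0 := by simpa using hf'z
        simp [map_sub, map_smul, hfe, hl'e]
        linarith
      have h2 : B e (z - (B f z) • e) = 0 := by
        simp [map_sub, map_smul, hez, hee]
      rw [h1, h2]
      simp
  · simp [hfl', hl', hel']
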